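/- Let d ≥ 1 and D = 2d − 1, and let A ∈ ℝ^{d×D} with columns a_1, …, a_D ∈ ℝ^d. Then A is a universal key for ℝ^{2×d} (i.e., β_A(X) = β_A(Y) implies X = Y or X equals Y with rows exchanged) if and only if A is full spark, meaning every subset of d of its columns is linearly independent. -/

import Mathlib

open scoped BigOperators

namespace PR

noncomputable section

/-- Euclidean inner product on `ℝ^d`. -/
def dot {d : ℕ} (x y : Fin d → ℝ) : ℝ := ∑ i, x i * y i

/-- The `k`-th column of `A`. -/
def col {d D : ℕ} (A : Matrix (Fin d) (Fin D) ℝ) (k : Fin D) : Fin d → ℝ := fun i => A i k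

/-- Analysis operator `T_A(x)_k = ⟨x, a_k⟩`. -/
def TA {d D : ℕ} (A : Matrix (Fin d) (Fin D) ℝ) (x : Fin d → ℝ) : Fin D → ℝ :=
  fun k => dot x (col A k)

/-- Phase-retrieval map `α_A(x)_k = |⟨x, a_k⟩|`. -/
def alpha {d D : ℕ} (A : Matrix (Fin d) (Fin D) ℝ) (x : Fin d → ℝ) : Fin D → ℝ :=
  fun k => |dot x (col A k)|

/-- Sorting encoder `β_A(X)`: its `k`-th column is the decreasingly sorted pair
`(max(⟨x₁,a_k⟩,⟨x₂,a_k⟩), min(⟨x₁,a_k⟩,⟨x₂,a_k⟩))`. -/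
def beta {d D : ℕ} (A : Matrix (Fin d) (Fin D) ℝ) (X : Matrix (Fin 2) (Fin d) ℝ) :
    Matrix (Fin 2) (Fin D) ℝ :=
  Matrix.of fun j k =>
    if j = 0 then max (dot (X 0) (col A k)) (dot (X 1) (col A k))
    else min (dot (X 0) (col A k)) (dot (X 1) (col A k))

/-- The 2×2 permutation matrix exchanging the two rows. -/
def P : Matrix (Fin 2) (Fin 2) ℝ := Matrix.of ![![0, 1], ![1, 0]]

/-- Euclidean norm on `ℝ^n`. -/
def vnorm {n : ℕ} (x : Fin n → ℝ) : ℝ := Real.sqrt (∑ i, (x i) ^ 2)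

/-- Frobenius norm on `ℝ^{2×n}`. -/
def fnorm {n : ℕ} (X : Matrix (Fin 2) (Fin n) ℝ) : ℝ := Real.sqrt (∑ i, ∑ j, (X i j) ^ 2)

/-- Operator norm of `T_A` (largest singular value of `A`): supremum of `‖T_A x‖`
over unit vectors `x`. -/
def sigma1 {d D : ℕ} (A : Matrix (Fin d) (Fin D) ℝ) : ℝ :=
  sSup {c : ℝ | ∃ x : Fin d → ℝ, vnorm x = 1 ∧ c = vnorm (TA A x)}

/-- `λ(I) = inf { Σ_{i∈I} ⟨u, a_i⟩² : ‖u‖ = 1 }`, the square of the `d`-th singular value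
of the submatrix `A[I]`. -/
def lam {d D : ℕ} (A : Matrix (Fin d) (Fin D) ℝ) (I : Finset (Fin D)) : ℝ :=
  sInf {c : ℝ | ∃ u : Fin d → ℝ, vnorm u = 1 ∧ c = ∑ i ∈ I, (dot u (col A i)) ^ 2}

/-- `A₀² = min_I (λ(I) + λ(Iᶜ))`. -/
def A0sq {d D : ℕ} (A : Matrix (Fin d) (Fin D) ℝ) : ℝ :=
  sInf {c : ℝ | ∃ I : Finset (Fin D), c = lam A I + lam A Iᶜ}

/- ### Auxiliary lemmas -/

lemma dot_add_left {d : ℕ} (x y z : Fin d → ℝ) :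
    dot (x + y) z = dot x z + dot y z := by
  simp [dot, add_mul, Finset.sum_add_distrib]

lemma dot_sub_left {d : ℕ} (x y z : Fin d → ℝ) :
    dot (x - y) z = dot x z - dot y z := by
  simp [dot, sub_mul, Finset.sum_sub_distrib]

lemma dot_neg_left {d : ℕ} (x z : Fin d → ℝ) :
    dot (-x) z = - dot x z := by
  simp [dot]

/-- `dot v ·` as a linear map. -/
def dotR {d : ℕ} (v : Fin d → ℝ) : (Fin d → ℝ) →ₗ[ℝ] ℝ where
  toFun x := dot v x
  map_add' x y := by simp [dot, mul_add, Finset.sum_add_distrib]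
  map_smul' c x := by simp [dot, Finset.mul_sum, mul_left_comm]

lemma dot_self_eq_zero' {d : ℕ} {v : Fin d → ℝ} (h : dot v v = 0) : v = 0 := by
  funext i
  have h0 : ∀ i ∈ Finset.univ, (0:ℝ) ≤ v i * v i := fun i _ => mul_self_nonneg _
  have := (Finset.sum_eq_zero_iff_of_nonneg h0).mp h i (Finset.mem_univ i)
  simpa using mul_self_eq_zero.mp this

lemma eq_zero_of_dot_eq_zero {d : ℕ} {ι : Type} [Fintype ι]
    (f : ι → (Fin d → ℝ)) (hcard : Fintype.card ι = d)
    (hf : LinearIndependent ℝ f) {v : Fin d → ℝ}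
    (h : ∀ k, dot v (f k) = 0) : v = 0 := by
  have hspan : Submodule.span ℝ (Set.range f) = ⊤ :=
    hf.span_eq_top_of_card_eq_finrank' (by simp [hcard])
  have hker : Submodule.span ℝ (Set.range f) ≤ LinearMap.ker (dotR v) := by
    rw [Submodule.span_le]
    rintro x ⟨k, rfl⟩
    exact h k
  exact dot_self_eq_zero' (hker (hspan ▸ Submodule.mem_top))

open RealInnerProductSpace in
lemma exists_perp {d : ℕ} {ι : Type} [Fintype ι]
    (f : ι → EuclideanSpace ℝ (Fin d))
    (h : Submodule.span ℝ (Set.range f) ≠ ⊤) :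
    ∃ v : Fin d → ℝ, v ≠ 0 ∧ ∀ k, dot v (f k) = 0 := by
  have hbot : (Submodule.span ℝ (Set.range f))ᗮ ≠ ⊥ :=
    fun hb => h (Submodule.orthogonal_eq_bot_iff.mp hb)
  obtain ⟨v, hv, hv0⟩ := Submodule.exists_mem_ne_zero_of_ne_bot hbot
  refine ⟨v, by simpa using hv0, fun k => ?_⟩
  have : ⟪f k, v⟫ = 0 := hv (f k) (Submodule.subset_span ⟨k, rfl⟩)
  simpa [dot, PiLp.inner_apply, RCLike.inner_apply, mul_comm] using this

lemma exists_perp_card_lt {d : ℕ} {ι : Type} [Fintype ι] (f : ι → (Fin d → ℝ))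
    (hc : Fintype.card ι < d) :
    ∃ v : Fin d → ℝ, v ≠ 0 ∧ ∀ k, dot v (f k) = 0 := by
  apply exists_perp (fun k => WithLp.toLp 2 (f k))
  intro htop
  have := finrank_le_of_span_eq_top htop
  simp [Module.finrank_fintype_fun_eq_card, finrank_euclideanSpace_fin] at this
  omega

lemma exists_perp_dep {d : ℕ} {ι : Type} [Fintype ι] (f : ι → (Fin d → ℝ))
    (h : ¬ LinearIndependent ℝ f) (hc : Fintype.card ι = d) :
    ∃ v : Fin d → ℝ, v ≠ 0 ∧ ∀ k, dot v (f k) = 0 := by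
  apply exists_perp (fun k => WithLp.toLp 2 (f k))
  intro htop
  apply h
  have hfr : Set.finrank ℝ (Set.range fun k => WithLp.toLp 2 (f k)) = d := by
    rw [Set.finrank, htop]
    simp [finrank_euclideanSpace_fin]
  have hli : LinearIndependent ℝ (fun k => WithLp.toLp 2 (f k)) :=
    linearIndependent_iff_card_eq_finrank_span.mpr (by rw [hfr, hc])
  exact hli.map' (WithLp.linearEquiv 2 ℝ (Fin d → ℝ)).toLinearMap (LinearEquiv.ker _)

lemma max_neg_self (t : ℝ) : max t (-t) = |t| := (abs_eq_max_neg).symm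

lemma min_neg_self (t : ℝ) : min t (-t) = -|t| := by
  rcases le_total t 0 with h | h
  · rw [abs_of_nonpos h, min_eq_left (by linarith), neg_neg]
  · rw [abs_of_nonneg h, min_eq_right (by linarith)]

/-- if `D = 2d - 1`, then `A` is a universal key iff `A` is full spark. -/
theorem universal_key_iff_full_spark
    {d D : ℕ} (hd : 1 ≤ d) (hD : D = 2 * d - 1) (A : Matrix (Fin d) (Fin D) ℝ) :
    (∀ X Y : Matrix (Fin 2) (Fin d) ℝ, beta A X = beta A Y → X = Y ∨ X = P * Y) ↔
      (∀ S : Finset (Fin D), S.card = d →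
        LinearIndependent ℝ (fun i : S => col A (i : Fin D))) := by
  have hDd : d ≤ D := by omega
  constructor
  · -- universal key → full spark
    intro hkey S hScard
    by_contra hdep
    obtain ⟨u, hu0, hu⟩ := exists_perp_dep (fun i : S => col A (i : Fin D)) hdep
      (by simp [hScard])
    obtain ⟨v, hv0, hv⟩ :=
      exists_perp_card_lt (fun i : (Sᶜ : Finset (Fin D)) => col A (i : Fin D))
        (by simp [Finset.card_compl, hScard]; omega)
    set w₁ : Fin d → ℝ := u + v with hw₁
    set w₂ : Fin d → ℝ := u - v with hw₂
    set X : Matrix (Fin 2) (Fin d) ℝ := Matrix.of ![w₁, -w₁] with hX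
    set Y : Matrix (Fin 2) (Fin d) ℝ := Matrix.of ![w₂, -w₂] with hY
    have habs : ∀ k, |dot w₁ (col A k)| = |dot w₂ (col A k)| := by
      intro k
      by_cases hk : k ∈ S
      · have h1 : dot u (col A k) = 0 := hu ⟨k, hk⟩
        have h2 : dot w₁ (col A k) = dot v (col A k) := by
          rw [hw₁, dot_add_left, h1, zero_add]
        have h3 : dot w₂ (col A k) = - dot v (col A k) := by
          rw [hw₂, dot_sub_left, h1, zero_sub]
        rw [h2, h3, abs_neg]
      · have h1 : dot v (col A k) = 0 := hv ⟨k, Finset.mem_compl.mpr hk⟩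
        have h2 : dot w₁ (col A k) = dot u (col A k) := by
          rw [hw₁, dot_add_left, h1, add_zero]
        have h3 : dot w₂ (col A k) = dot u (col A k) := by
          rw [hw₂, dot_sub_left, h1, sub_zero]
        rw [h2, h3]
    have hX0 : X 0 = w₁ := rfl
    have hX1 : X 1 = -w₁ := rfl
    have hY0 : Y 0 = w₂ := rfl
    have hY1 : Y 1 = -w₂ := rfl
    have hbeta : beta A X = beta A Y := by
      funext j k
      show (if j = 0 then max (dot (X 0) (col A k)) (dot (X 1) (col A k))
          else min (dot (X 0) (col A k)) (dot (X 1) (col A k)))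
        = (if j = 0 then max (dot (Y 0) (col A k)) (dot (Y 1) (col A k))
          else min (dot (Y 0) (col A k)) (dot (Y 1) (col A k)))
      rw [hX0, hX1, hY0, hY1, dot_neg_left, dot_neg_left, max_neg_self, max_neg_self,
        min_neg_self, min_neg_self, habs k]
    rcases hkey X Y hbeta with h | h
    · apply hv0
      funext j
      have h0 := congrFun (congrFun h 0) j
      rw [hX0, hY0] at h0
      have h1 : (u + v) j = (u - v) j := h0
      simp only [Pi.add_apply, Pi.sub_apply] at h1
      show v j = (0:ℝ)
      linarith
    · apply hu0
      funext j
      have h0 := congrFun (congrFun h 0) j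
      have hPY : (P * Y) 0 j = (-w₂) j := by
        rw [Matrix.mul_apply, Fin.sum_univ_two, ← hY1]
        simp [P]
      rw [hX0, hPY] at h0
      have h1 : (u + v) j = -((u - v) j) := h0
      simp only [Pi.add_apply, Pi.sub_apply] at h1
      show u j = (0:ℝ)
      linarith
  · -- full spark → universal key
    intro hspark X Y hbeta
    have hz : ∀ (v : Fin d → ℝ) (S : Finset (Fin D)), S.card = d →
        (∀ k ∈ S, dot v (col A k) = 0) → v = 0 := by
      intro v S hc h
      exact eq_zero_of_dot_eq_zero (fun i : S => col A (i : Fin D))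
        (by simp [hc]) (hspark S hc) (fun k => h k k.2)
    have hmx : ∀ k, max (dot (X 0) (col A k)) (dot (X 1) (col A k))
        = max (dot (Y 0) (col A k)) (dot (Y 1) (col A k)) := by
      intro k
      have := congrFun (congrFun hbeta 0) k
      simpa [beta] using this
    have hmn : ∀ k, min (dot (X 0) (col A k)) (dot (X 1) (col A k))
        = min (dot (Y 0) (col A k)) (dot (Y 1) (col A k)) := by
      intro k
      have := congrFun (congrFun hbeta 1) k
      simpa [beta] using this
    have hsum : ∀ k, dot (X 0 + X 1) (col A k) = dot (Y 0 + Y 1) (col A k) := by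
      intro k
      have e1 := max_add_min (dot (X 0) (col A k)) (dot (X 1) (col A k))
      have e2 := max_add_min (dot (Y 0) (col A k)) (dot (Y 1) (col A k))
      rw [dot_add_left, dot_add_left]
      linarith [hmx k, hmn k]
    have habs : ∀ k, |dot (X 0 - X 1) (col A k)| = |dot (Y 0 - Y 1) (col A k)| := by
      intro k
      have e1 := max_sub_min_eq_abs (dot (X 0) (col A k)) (dot (X 1) (col A k))
      have e2 := max_sub_min_eq_abs (dot (Y 0) (col A k)) (dot (Y 1) (col A k))
      rw [dot_sub_left, dot_sub_left, abs_sub_comm, abs_sub_comm (dot (Y 0) (col A k)),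
        ← e1, ← e2, hmx k, hmn k]
    obtain ⟨T, -, hTcard⟩ := Finset.exists_subset_card_eq (s := (Finset.univ : Finset (Fin D))) (n := d)
      (by simpa using hDd)
    have hs : X 0 + X 1 = Y 0 + Y 1 := by
      have := hz ((X 0 + X 1) - (Y 0 + Y 1)) T hTcard (fun k _ => by
        rw [dot_sub_left, hsum k, sub_self])
      exact sub_eq_zero.mp this
    set I : Finset (Fin D) :=
      Finset.univ.filter
        (fun k => dot (X 0 - X 1) (col A k) = dot (Y 0 - Y 1) (col A k)) with hI
    set J : Finset (Fin D) :=
      Finset.univ.filter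
        (fun k => dot (X 0 - X 1) (col A k) = - dot (Y 0 - Y 1) (col A k)) with hJ
    have hIJ : ∀ k, k ∈ I ∨ k ∈ J := by
      intro k
      rcases abs_eq_abs.mp (habs k) with h | h
      · left; simp [hI, h]
      · right; simp [hJ, h]
    have hcard : d ≤ I.card ∨ d ≤ J.card := by
      have hunion : (Finset.univ : Finset (Fin D)) ⊆ I ∪ J := fun k _ =>
        Finset.mem_union.mpr (hIJ k)
      have h1 : D ≤ (I ∪ J).card := by
        simpa using Finset.card_le_card hunion
      have h2 : (I ∪ J).card ≤ I.card + J.card := Finset.card_union_le I J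
      omega
    rcases hcard with hc | hc
    · left
      obtain ⟨T', hT'sub, hT'card⟩ := Finset.exists_subset_card_eq (s := I) (n := d) hc
      have hdiff : X 0 - X 1 = Y 0 - Y 1 := by
        have := hz ((X 0 - X 1) - (Y 0 - Y 1)) T' hT'card (fun k hk => by
          have hkI : dot (X 0 - X 1) (col A k) = dot (Y 0 - Y 1) (col A k) := by
            have := hT'sub hk
            simpa [hI] using this
          rw [dot_sub_left, hkI, sub_self])
        exact sub_eq_zero.mp this
      have h0 : X 0 = Y 0 := by
        funext j
        have e1 := congrFun hs j
        have e2 := congrFun hdiff j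
        simp only [Pi.add_apply, Pi.sub_apply] at e1 e2
        linarith
      have h1 : X 1 = Y 1 := by
        funext j
        have e1 := congrFun hs j
        have e2 := congrFun hdiff j
        simp only [Pi.add_apply, Pi.sub_apply] at e1 e2
        linarith
      funext i j
      fin_cases i
      · exact congrFun h0 j
      · exact congrFun h1 j
    · right
      obtain ⟨T', hT'sub, hT'card⟩ := Finset.exists_subset_card_eq (s := J) (n := d) hc
      have hdiff : X 0 - X 1 = -(Y 0 - Y 1) := by
        have := hz ((X 0 - X 1) + (Y 0 - Y 1)) T' hT'card (fun k hk => by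
          have hkJ : dot (X 0 - X 1) (col A k) = - dot (Y 0 - Y 1) (col A k) := by
            have := hT'sub hk
            simpa [hJ] using this
          rw [dot_add_left, hkJ, neg_add_cancel])
        exact eq_neg_of_add_eq_zero_left this
      have h0 : X 0 = Y 1 := by
        funext j
        have e1 := congrFun hs j
        have e2 := congrFun hdiff j
        simp only [Pi.add_apply, Pi.sub_apply, Pi.neg_apply] at e1 e2
        linarith
      have h1 : X 1 = Y 0 := by
        funext j
        have e1 := congrFun hs j
        have e2 := congrFun hdiff j
        simp only [Pi.add_apply, Pi.sub_apply, Pi.neg_apply] at e1 e2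
        linarith
      funext i j
      fin_cases i
      · have hPY : (P * Y) 0 j = Y 1 j := by
          rw [Matrix.mul_apply, Fin.sum_univ_two]
          simp [P]
        show X 0 j = (P * Y) 0 j
        rw [hPY]
        exact congrFun h0 j
      · have hPY : (P * Y) 1 j = Y 0 j := by
          rw [Matrix.mul_apply, Fin.sum_univ_two]
          simp [P]
        show X 1 j = (P * Y) 1 j
        rw [hPY]
        exact congrFun h1 j

end

end PR
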